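/- Let 𝔍₀, 𝔍₁, …, 𝔍_k and 𝔍₀', 𝔍₁', …, 𝔍_k' be tuples of distinct points of Λ₊ with |𝔍_j| = |𝔍_j'| for j = 1, …, k. Then Tr((Θ(C_{𝔍₀})∘C_{𝔍₀'})·(Θ(C_{𝔍₁})∘C_{𝔍₁'})⋯(Θ(C_{𝔍_k})∘C_{𝔍_k'})) = conj(Tr(C_{𝔍₀}⋯C_{𝔍_k}))·Tr(C_{𝔍₀'}⋯C_{𝔍_k'}). -/

import Mathlib

open ComplexOrder

noncomputable section

/-- The setting of the paper: a finite set `Λ` with a fixed-point free involution `ϑ`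
exchanging `Λp` and its complement, the Clifford algebra (algebra of Majoranas) `carrier`
with self-adjoint generators `c i`, the global gauge automorphism `gauge`, the antilinear
reflection `*`-automorphism `Θ`, a square root `ζ` of `-1`, the twisted product `twist`,
a choice `P` of orderings of the subsets of `Λp` (giving the bases
`{C J : J ∈ P}` of `𝔄₊` and `{Θ(C J) ∘ C J' : J, J' ∈ P}` of `𝔄`),
and the tracial state `Tr` picking out the coefficient of `1` in the basis expansion. -/
structure MajoranaSetting where
  Λ : Type
  [fintypeΛ : Fintype Λ]
  [deceqΛ : DecidableEq Λ]
  ϑ : Λ → Λ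
  ϑ_invol : Function.Involutive ϑ
  ϑ_fixfree : ∀ i, ϑ i ≠ i
  Λp : Finset Λ
  ϑ_exch : ∀ i, i ∈ Λp ↔ ϑ i ∉ Λp
  carrier : Type
  [nring : NormedRing carrier]
  [nalg : NormedAlgebra ℂ carrier]
  [cmpl : CompleteSpace carrier]
  [starring : StarRing carrier]
  [starmod : StarModule ℂ carrier]
  c : Λ → carrier
  c_star : ∀ i, star (c i) = c i
  clifford : ∀ i j, c i * c j + c j * c i = if i = j then (2 : carrier) else 0
  gauge : carrier ≃ₐ[ℂ] carrier
  gauge_c : ∀ i, gauge (c i) = - c i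
  Θ : carrier → carrier
  Θ_add : ∀ x y, Θ (x + y) = Θ x + Θ y
  Θ_smul : ∀ (z : ℂ) (x), Θ (z • x) = (starRingEnd ℂ z) • Θ x
  Θ_mul : ∀ x y, Θ (x * y) = Θ x * Θ y
  Θ_star : ∀ x, Θ (star x) = star (Θ x)
  Θ_invol : ∀ x, Θ (Θ x) = x
  Θ_c : ∀ i, Θ (c i) = c (ϑ i)
  ζ : ℂ
  ζ_sq : ζ ^ 2 = -1
  twist : carrier → carrier → carrier
  twist_add_left : ∀ x x' y, twist (x + x') y = twist x y + twist x' y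
  twist_add_right : ∀ x y y', twist x (y + y') = twist x y + twist x y'
  twist_smul_left : ∀ (z : ℂ) (x y), twist (z • x) y = z • twist x y
  twist_smul_right : ∀ (z : ℂ) (x y), twist x (z • y) = z • twist x y
  twist_spec : ∀ (Am Ap Bm Bp : carrier) (a b a' b' : ℕ),
    a ≤ 1 → b ≤ 1 → a' ≤ 1 → b' ≤ 1 →
    Am ∈ Algebra.adjoin ℂ (c '' {i | i ∉ Λp}) →
    Ap ∈ Algebra.adjoin ℂ (c '' {i | i ∈ Λp}) →
    Bm ∈ Algebra.adjoin ℂ (c '' {i | i ∉ Λp}) →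
    Bp ∈ Algebra.adjoin ℂ (c '' {i | i ∈ Λp}) →
    gauge Am = ((-1 : ℂ) ^ a) • Am →
    gauge Ap = ((-1 : ℂ) ^ b) • Ap →
    gauge Bm = ((-1 : ℂ) ^ a') • Bm →
    gauge Bp = ((-1 : ℂ) ^ b') • Bp →
    twist (Am * Ap) (Bm * Bp)
      = ζ ^ ((a * b' : ℤ) - (b * a' : ℤ)) • (Am * Ap * (Bm * Bp))
  P : Finset (List Λ)
  P_nodup : ∀ J ∈ P, J.Nodup
  P_sub : ∀ J ∈ P, ∀ i ∈ J, i ∈ Λp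
  P_unique : ∀ s : Finset Λ, s ⊆ Λp → ∃! J, J ∈ P ∧ J.toFinset = s
  Tr : carrier →ₗ[ℂ] ℂ
  Tr_basis : ∀ J ∈ P, ∀ J' ∈ P,
    Tr (twist (Θ ((J.map c).prod)) ((J'.map c).prod))
      = if J = [] ∧ J' = [] then 1 else 0
  basis_indep : LinearIndependent ℂ
    (fun p : {J // J ∈ P} × {J // J ∈ P} =>
      twist (Θ ((p.1.1.map c).prod)) ((p.2.1.map c).prod))
  basis_span : ∀ x : carrier, x ∈ Submodule.span ℂ
    (Set.range fun p : {J // J ∈ P} × {J // J ∈ P} =>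
      twist (Θ ((p.1.1.map c).prod)) ((p.2.1.map c).prod))
  plus_span : ∀ x ∈ Algebra.adjoin ℂ (c '' {i | i ∈ Λp}),
    x ∈ Submodule.span ℂ (Set.range fun J : {J // J ∈ P} => ((J.1.map c).prod))

attribute [instance] MajoranaSetting.fintypeΛ MajoranaSetting.deceqΛ
  MajoranaSetting.nring MajoranaSetting.nalg MajoranaSetting.cmpl
  MajoranaSetting.starring MajoranaSetting.starmod

namespace MajoranaSetting

variable (S : MajoranaSetting)

/-- The subalgebra `𝔄₊` generated by the Majoranas on the `+` side. -/
def Aplus : Subalgebra ℂ S.carrier := Algebra.adjoin ℂ (S.c '' {i | i ∈ S.Λp})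

/-- The subalgebra `𝔄₋` generated by the Majoranas on the `-` side. -/
def Aminus : Subalgebra ℂ S.carrier := Algebra.adjoin ℂ (S.c '' {i | i ∉ S.Λp})

/-- The monomial `C_𝔍 = c_{i₁} ⋯ c_{i_k}`. -/
def C (J : List S.Λ) : S.carrier := (J.map S.c).prod

/-- `q_𝔍 = (-1)^{k(k-1)/2}`. -/
def q (J : List S.Λ) : ℂ := (-1 : ℂ) ^ (J.length * (J.length - 1) / 2)

/-- `s_𝔍 = ζ^{k(k-1)/2}`. -/
def sgn (J : List S.Λ) : ℂ := S.ζ ^ (J.length * (J.length - 1) / 2)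

/-- The exponential `e^x` in the (finite-dimensional) algebra `𝔄`. -/
def expm (x : S.carrier) : S.carrier := NormedSpace.exp x

/-- The Hamiltonian `H = -∑_{𝔍,𝔍' ∈ 𝒫₊} J_{𝔍𝔍'} Θ(C_𝔍) ∘ C_𝔍'`
determined by coupling constants `Jc`. -/
def Ham (Jc : List S.Λ → List S.Λ → ℂ) : S.carrier :=
  - ∑ J ∈ S.P, ∑ J' ∈ S.P, Jc J J' • S.twist (S.Θ (S.C J)) (S.C J')

/-- The index type of the basis `{C J : J ∈ 𝒫₊}`. -/
abbrev PIdx := {J : List S.Λ // J ∈ S.P}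

/-- The index type `𝒫₊ - {∅}` of couplings across the reflection plane. -/
abbrev PIdx0 := {p : S.PIdx // p.1 ≠ []}

/-- The full matrix of coupling constants. -/
def Jmat (Jc : List S.Λ → List S.Λ → ℂ) : Matrix S.PIdx S.PIdx ℂ :=
  Matrix.of fun p q => Jc p.1 q.1

/-- The matrix `J⁰` of coupling constants across the reflection plane. -/
def Jmat0 (Jc : List S.Λ → List S.Λ → ℂ) : Matrix S.PIdx0 S.PIdx0 ℂ :=
  Matrix.of fun p q => Jc p.1.1 q.1.1

end MajoranaSetting


namespace MajoranaSetting

variable (S : MajoranaSetting)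

lemma zeta_ne_zero : S.ζ ≠ 0 := by
  intro h
  have h2 := S.ζ_sq
  rw [h] at h2
  norm_num at h2

lemma zeta_pow_four : S.ζ ^ 4 = 1 := by
  have h2 := S.ζ_sq
  calc S.ζ ^ 4 = (S.ζ ^ 2) ^ 2 := by ring
  _ = 1 := by rw [h2]; norm_num

lemma zeta_two_mul (x : ℕ) : S.ζ ^ (2 * x) = (-1 : ℂ) ^ x := by
  rw [pow_mul, S.ζ_sq]

lemma neg_one_pow_par (m n : ℕ) (h : m % 2 = n % 2) : ((-1 : ℂ)) ^ m = (-1) ^ n := by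
  conv_lhs => rw [← Nat.div_add_mod m 2]
  conv_rhs => rw [← Nat.div_add_mod n 2]
  rw [pow_add, pow_add, pow_mul, pow_mul, h]
  norm_num

lemma Θ_one : S.Θ 1 = 1 := by
  have h : S.Θ (S.Θ 1) = S.Θ (S.Θ 1) * S.Θ 1 := by
    conv_lhs => rw [show S.Θ 1 = S.Θ 1 * 1 from (mul_one _).symm, S.Θ_mul]
  rw [S.Θ_invol, one_mul] at h
  exact h.symm

lemma Θ_zero : S.Θ 0 = 0 := by
  have h := S.Θ_add 0 0
  rw [add_zero] at h
  exact (left_eq_add.mp h)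

lemma C_nil : S.C [] = 1 := rfl

lemma C_cons (i : S.Λ) (J : List S.Λ) : S.C (i :: J) = S.c i * S.C J := by
  simp [C]

lemma C_append (J K : List S.Λ) : S.C (J ++ K) = S.C J * S.C K := by
  simp [C]

lemma Θ_C (J : List S.Λ) : S.Θ (S.C J) = S.C (J.map S.ϑ) := by
  induction J with
  | nil => simpa [S.C_nil] using S.Θ_one
  | cons i J ih => rw [S.C_cons, S.Θ_mul, S.Θ_c, ih, List.map_cons, S.C_cons]

lemma c_anticomm {i j : S.Λ} (h : i ≠ j) : S.c i * S.c j = -(S.c j * S.c i) := by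
  have hc := S.clifford i j
  rw [if_neg h] at hc
  exact eq_neg_of_add_eq_zero_left hc

lemma c_prod_comm (i : S.Λ) (M : List S.Λ) (h : ∀ j ∈ M, i ≠ j) :
    S.c i * S.C M = ((-1 : ℂ) ^ M.length) • (S.C M * S.c i) := by
  induction M with
  | nil => simp [S.C_nil]
  | cons j M ih =>
    have h1 : S.c i * S.c j = -(S.c j * S.c i) := S.c_anticomm (h j (by simp))
    have h2 := ih (fun a ha => h a (by simp [ha]))
    calc S.c i * S.C (j :: M) = (S.c i * S.c j) * S.C M := by
          rw [S.C_cons, mul_assoc]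
    _ = -(S.c j * (S.c i * S.C M)) := by rw [h1, neg_mul, mul_assoc]
    _ = -(S.c j * (((-1 : ℂ) ^ M.length) • (S.C M * S.c i))) := by rw [h2]
    _ = ((-1 : ℂ) ^ (M.length + 1)) • (S.C (j :: M) * S.c i) := by
          rw [S.C_cons, mul_smul_comm, ← smul_neg, pow_succ, mul_smul]
          congr 1
          rw [neg_one_smul, mul_assoc]

lemma C_comm_sign (L M : List S.Λ) (h : ∀ i ∈ L, ∀ j ∈ M, i ≠ j) :
    S.C L * S.C M = ((-1 : ℂ) ^ (L.length * M.length)) • (S.C M * S.C L) := by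
  induction L with
  | nil => simp [S.C_nil]
  | cons i L ih =>
    have hi : ∀ j ∈ M, i ≠ j := h i (by simp)
    have hL : ∀ a ∈ L, ∀ j ∈ M, a ≠ j := fun a ha => h a (by simp [ha])
    calc S.C (i :: L) * S.C M = S.c i * (S.C L * S.C M) := by rw [S.C_cons, mul_assoc]
    _ = S.c i * (((-1 : ℂ) ^ (L.length * M.length)) • (S.C M * S.C L)) := by rw [ih hL]
    _ = ((-1 : ℂ) ^ (L.length * M.length)) • ((S.c i * S.C M) * S.C L) := by
          rw [mul_smul_comm, mul_assoc]
    _ = ((-1 : ℂ) ^ (L.length * M.length)) • ((((-1 : ℂ) ^ M.length) • (S.C M * S.c i)) * S.C L) := by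
          rw [S.c_prod_comm i M hi]
    _ = ((-1 : ℂ) ^ (L.length * M.length) * (-1 : ℂ) ^ M.length) • (S.C M * S.C (i :: L)) := by
          rw [smul_mul_assoc, smul_smul, mul_assoc, S.C_cons]
    _ = ((-1 : ℂ) ^ ((i :: L).length * M.length)) • (S.C M * S.C (i :: L)) := by
          rw [← pow_add, List.length_cons]
          congr 2
          ring

lemma C_mem_plus (J : List S.Λ) (h : ∀ i ∈ J, i ∈ S.Λp) :
    S.C J ∈ Algebra.adjoin ℂ (S.c '' {i | i ∈ S.Λp}) := by
  induction J with
  | nil => rw [S.C_nil]; exact one_mem _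
  | cons i J ih =>
    rw [S.C_cons]
    exact mul_mem (Algebra.subset_adjoin ⟨i, h i (by simp), rfl⟩)
      (ih fun a ha => h a (by simp [ha]))

lemma C_mem_minus (J : List S.Λ) (h : ∀ i ∈ J, i ∉ S.Λp) :
    S.C J ∈ Algebra.adjoin ℂ (S.c '' {i | i ∉ S.Λp}) := by
  induction J with
  | nil => rw [S.C_nil]; exact one_mem _
  | cons i J ih =>
    rw [S.C_cons]
    exact mul_mem (Algebra.subset_adjoin ⟨i, h i (by simp), rfl⟩)
      (ih fun a ha => h a (by simp [ha]))

lemma gauge_C (J : List S.Λ) : S.gauge (S.C J) = ((-1 : ℂ) ^ J.length) • S.C J := by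
  induction J with
  | nil => simp [S.C_nil]
  | cons i J ih =>
    rw [S.C_cons, map_mul, S.gauge_c, ih, List.length_cons, mul_smul_comm, pow_succ,
      mul_comm ((-1:ℂ)^J.length) (-1), mul_smul, neg_one_smul, neg_mul, smul_neg]

lemma gauge_C_par (J : List S.Λ) :
    S.gauge (S.C J) = ((-1 : ℂ) ^ (J.length % 2)) • S.C J := by
  rw [S.gauge_C, neg_one_pow_par J.length (J.length % 2) (Nat.mod_mod_of_dvd _ dvd_rfl).symm]

lemma gauge_ΘC_par (J : List S.Λ) :
    S.gauge (S.Θ (S.C J)) = ((-1 : ℂ) ^ (J.length % 2)) • S.Θ (S.C J) := by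
  rw [S.Θ_C, S.gauge_C_par, List.length_map]

lemma ΘC_mem_minus (J : List S.Λ) (h : ∀ i ∈ J, i ∈ S.Λp) :
    S.Θ (S.C J) ∈ Algebra.adjoin ℂ (S.c '' {i | i ∉ S.Λp}) := by
  rw [S.Θ_C]
  refine S.C_mem_minus _ (fun j hj => ?_)
  obtain ⟨i, hi, rfl⟩ := List.mem_map.mp hj
  exact (S.ϑ_exch i).mp (h i hi)

lemma twist_monomial (F Gl : List S.Λ) (hF : ∀ i ∈ F, i ∈ S.Λp) (hG : ∀ i ∈ Gl, i ∈ S.Λp) :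
    S.twist (S.Θ (S.C F)) (S.C Gl)
      = S.ζ ^ ((F.length % 2) * (Gl.length % 2)) • (S.Θ (S.C F) * S.C Gl) := by
  have h := S.twist_spec (S.Θ (S.C F)) 1 1 (S.C Gl)
      (F.length % 2) 0 0 (Gl.length % 2)
      (by omega) (by omega) (by omega) (by omega)
      (S.ΘC_mem_minus F hF) (one_mem _) (one_mem _) (S.C_mem_plus Gl hG)
      (S.gauge_ΘC_par F) (by simp) (by simp) (S.gauge_C_par Gl)
  rw [mul_one, one_mul] at h
  have he : ((F.length % 2 : ℕ) * (Gl.length % 2 : ℕ) : ℤ) - ((0 : ℕ) * (0 : ℕ) : ℤ)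
      = (((F.length % 2) * (Gl.length % 2) : ℕ) : ℤ) := by push_cast; ring
  rw [he, zpow_natCast] at h
  exact h

lemma nil_mem_P : [] ∈ S.P := by
  obtain ⟨J, ⟨hJP, hJ⟩, -⟩ := S.P_unique ∅ (by simp)
  have hJn : J = [] := (List.toFinset_eq_empty_iff J).mp hJ
  rwa [hJn] at hJP

lemma Tr_C (J : List S.Λ) (hJ : J ∈ S.P) : S.Tr (S.C J) = if J = [] then 1 else 0 := by
  have h := S.Tr_basis [] S.nil_mem_P J hJ
  have e1 : (([] : List S.Λ).map S.c).prod = S.C [] := rfl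
  have e2 : (J.map S.c).prod = S.C J := rfl
  rw [e1, e2, S.twist_monomial [] J (by simp) (S.P_sub J hJ)] at h
  simp only [S.C_nil, S.Θ_one, List.length_nil, Nat.zero_mod, zero_mul, pow_zero, one_smul,
    one_mul, true_and] at h
  exact h

lemma Tr_pair (J J' : List S.Λ) (hJ : J ∈ S.P) (hJ' : J' ∈ S.P) :
    S.Tr (S.Θ (S.C J) * S.C J')
      = (if J = [] then 1 else 0) * (if J' = [] then 1 else 0) := by
  have h := S.Tr_basis J hJ J' hJ'
  have e1 : (J.map S.c).prod = S.C J := rfl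
  have e2 : (J'.map S.c).prod = S.C J' := rfl
  rw [e1, e2, S.twist_monomial J J' (S.P_sub J hJ) (S.P_sub J' hJ'), map_smul,
    smul_eq_mul] at h
  by_cases hc : J = [] ∧ J' = []
  · obtain ⟨h1, h2⟩ := hc
    subst h1; subst h2
    simp only [List.length_nil, Nat.zero_mod, mul_zero, pow_zero, one_mul, if_pos rfl,
      and_self, if_pos] at h ⊢
    simp [h]
  · rw [if_neg hc] at h
    have hz : S.ζ ^ ((J.length % 2) * (J'.length % 2)) ≠ 0 := pow_ne_zero _ S.zeta_ne_zero
    have h0 : S.Tr (S.Θ (S.C J) * S.C J') = 0 := by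
      exact (mul_eq_zero.mp h).resolve_left hz
    rw [h0]
    rcases not_and_or.mp hc with hn | hn
    · rw [if_neg hn, zero_mul]
    · rw [if_neg hn, mul_zero]

/-- The span of the monomials `C J`, `J ∈ P`. -/
def plusSpan : Submodule ℂ S.carrier :=
  Submodule.span ℂ (Set.range fun J : {J // J ∈ S.P} => ((J.1.map S.c).prod))

lemma TR1 (J : List S.Λ) (hJ : J ∈ S.P) (B : S.carrier) (hB : B ∈ S.plusSpan) :
    S.Tr (S.Θ (S.C J) * B) = (starRingEnd ℂ) (S.Tr (S.C J)) * S.Tr B := by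
  induction hB using Submodule.span_induction with
  | mem x hx =>
    obtain ⟨J', rfl⟩ := hx
    show S.Tr (S.Θ (S.C J) * S.C J'.1) = (starRingEnd ℂ) (S.Tr (S.C J)) * S.Tr (S.C J'.1)
    rw [S.Tr_pair J J'.1 hJ J'.2, S.Tr_C J hJ, S.Tr_C J'.1 J'.2]
    split_ifs <;> simp
  | zero => simp
  | add x y hx hy ihx ihy =>
    rw [mul_add, map_add, map_add, ihx, ihy, mul_add]
  | smul z x hx ih =>
    rw [mul_smul_comm, map_smul, map_smul, smul_eq_mul, smul_eq_mul, ih]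
    ring

lemma TR (A B : S.carrier) (hA : A ∈ Algebra.adjoin ℂ (S.c '' {i | i ∈ S.Λp}))
    (hB : B ∈ Algebra.adjoin ℂ (S.c '' {i | i ∈ S.Λp})) :
    S.Tr (S.Θ A * B) = (starRingEnd ℂ) (S.Tr A) * S.Tr B := by
  have hA' : A ∈ S.plusSpan := S.plus_span A hA
  have hB' : B ∈ S.plusSpan := S.plus_span B hB
  clear hA hB
  induction hA' using Submodule.span_induction with
  | mem x hx =>
    obtain ⟨J, rfl⟩ := hx
    exact S.TR1 J.1 J.2 B hB'
  | zero => rw [S.Θ_zero]; simp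
  | add x y hx hy ihx ihy =>
    rw [S.Θ_add, add_mul, map_add, map_add, map_add, ihx, ihy]
    ring
  | smul z x hx ih =>
    rw [S.Θ_smul, smul_mul_assoc, map_smul, map_smul, smul_eq_mul, smul_eq_mul, ih]
    simp only [map_mul]
    ring

lemma Tr_gauge (A : S.carrier) (hA : A ∈ Algebra.adjoin ℂ (S.c '' {i | i ∈ S.Λp})) :
    S.Tr (S.gauge A) = S.Tr A := by
  have hA' : A ∈ S.plusSpan := S.plus_span A hA
  clear hA
  induction hA' using Submodule.span_induction with
  | mem x hx =>
    obtain ⟨J, rfl⟩ := hx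
    show S.Tr (S.gauge (S.C J.1)) = S.Tr (S.C J.1)
    rw [S.gauge_C, map_smul, S.Tr_C J.1 J.2, smul_eq_mul]
    split_ifs with h
    · simp [h]
    · simp
  | zero => simp
  | add x y hx hy ihx ihy => rw [map_add, map_add, map_add, ihx, ihy]
  | smul z x hx ih => rw [map_smul, map_smul, map_smul, smul_eq_mul, smul_eq_mul, ih]

lemma Tr_odd (A : S.carrier) (hA : A ∈ Algebra.adjoin ℂ (S.c '' {i | i ∈ S.Λp}))
    (h : S.gauge A = -A) : S.Tr A = 0 := by
  have hg := S.Tr_gauge A hA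
  rw [h, map_neg] at hg
  have h2 : (2 : ℂ) * S.Tr A = 0 := by linear_combination -hg
  exact (mul_eq_zero.mp h2).resolve_left two_ne_zero

/-- The phase exponent accumulated when normal-ordering the twisted product. -/
def ephase : List (ℕ × ℕ) → ℕ
  | [] => 0
  | p :: l => p.1 * p.2 + 2 * (p.2 * (l.map Prod.fst).sum) + ephase l

lemma ephase_sq (l : List ℕ) : ephase (l.map fun d => (d, d)) = l.sum ^ 2 := by
  induction l with
  | nil => simp [ephase]
  | cons d l ih =>
    rw [List.map_cons, List.sum_cons]
    show d * d + 2 * (d * ((l.map fun d => (d, d)).map Prod.fst).sum)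
        + ephase (l.map fun d => (d, d)) = (d + l.sum) ^ 2
    rw [ih, List.map_map]
    have : (Prod.fst ∘ fun d : ℕ => (d, d)) = id := rfl
    rw [this, List.map_id]
    ring

lemma list_sum_mod (l : List ℕ) : (l.map (· % 2)).sum % 2 = l.sum % 2 := by
  induction l with
  | nil => rfl
  | cons a l ih => simp only [List.map_cons, List.sum_cons]; omega

lemma mid_swap (a b x y : S.carrier) (σ : ℂ) (h : b * x = σ • (x * b)) :
    a * b * (x * y) = σ • (a * x * (b * y)) := by
  rw [mul_assoc a b (x * y), ← mul_assoc b x y, ← mul_assoc a (b * x) y, h,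
    mul_smul_comm, smul_mul_assoc]
  congr 1
  rw [← mul_assoc a x b, mul_assoc (a * x) b y]

lemma key (ps : List (List S.Λ × List S.Λ))
    (hp : ∀ p ∈ ps, (∀ i ∈ p.1, i ∈ S.Λp) ∧ (∀ i ∈ p.2, i ∈ S.Λp)) :
    (ps.map fun p => S.twist (S.Θ (S.C p.1)) (S.C p.2)).prod
      = S.ζ ^ (ephase (ps.map fun p => (p.1.length % 2, p.2.length % 2)))
        • (S.Θ (S.C (ps.map Prod.fst).flatten) * S.C (ps.map Prod.snd).flatten) := by
  induction ps with
  | nil =>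
    simp [ephase, S.C_nil, S.Θ_one]
  | cons p ps ih =>
    have hF : ∀ i ∈ p.1, i ∈ S.Λp := (hp p (by simp)).1
    have hG : ∀ i ∈ p.2, i ∈ S.Λp := (hp p (by simp)).2
    have hrest : ∀ q ∈ ps, (∀ i ∈ q.1, i ∈ S.Λp) ∧ (∀ i ∈ q.2, i ∈ S.Λp) :=
      fun q hq => hp q (by simp [hq])
    have hLF : ∀ i ∈ (ps.map Prod.fst).flatten, i ∈ S.Λp := by
      intro i hi
      obtain ⟨l, hl, hil⟩ := List.mem_flatten.mp hi
      obtain ⟨q, hq, rfl⟩ := List.mem_map.mp hl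
      exact (hrest q hq).1 i hil
    have hne : ∀ i ∈ p.2, ∀ j ∈ (ps.map Prod.fst).flatten.map S.ϑ, i ≠ j := by
      intro i hi j hj
      obtain ⟨j', hj', rfl⟩ := List.mem_map.mp hj
      intro hij
      exact ((S.ϑ_exch j').mp (hLF j' hj')) (hij ▸ hG i hi)
    have hcomm : S.C p.2 * S.Θ (S.C (ps.map Prod.fst).flatten)
        = ((-1 : ℂ) ^ (p.2.length * ((ps.map Prod.fst).flatten).length))
          • (S.Θ (S.C (ps.map Prod.fst).flatten) * S.C p.2) := by
      rw [S.Θ_C]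
      have h := S.C_comm_sign p.2 ((ps.map Prod.fst).flatten.map S.ϑ) hne
      rwa [List.length_map] at h
    rw [List.map_cons, List.prod_cons, ih hrest, S.twist_monomial p.1 p.2 hF hG,
      smul_mul_assoc, mul_smul_comm, smul_smul]
    rw [S.mid_swap _ _ _ _ _ hcomm, smul_smul]
    rw [← S.Θ_mul, ← S.C_append, ← S.C_append]
    simp only [List.map_cons, List.flatten_cons]
    congr 1
    -- scalar identity
    show S.ζ ^ (p.1.length % 2 * (p.2.length % 2))
        * S.ζ ^ ephase (ps.map fun p => (p.1.length % 2, p.2.length % 2))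
        * (-1 : ℂ) ^ (p.2.length * ((ps.map Prod.fst).flatten).length)
      = S.ζ ^ ephase ((p.1.length % 2, p.2.length % 2)
          :: ps.map fun p => (p.1.length % 2, p.2.length % 2))
    have hlen : ((ps.map Prod.fst).flatten).length = (ps.map fun q => q.1.length).sum := by
      rw [List.length_flatten, List.map_map]; rfl
    have hpar : ((ps.map fun p => (p.1.length % 2, p.2.length % 2)).map Prod.fst).sum
        = (ps.map fun q => q.1.length % 2).sum := by
      rw [List.map_map]; rfl
    show _ = S.ζ ^ ((p.1.length % 2) * (p.2.length % 2)
        + 2 * ((p.2.length % 2) * ((ps.map fun p => (p.1.length % 2, p.2.length % 2)).map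
            Prod.fst).sum)
        + ephase (ps.map fun p => (p.1.length % 2, p.2.length % 2)))
    rw [pow_add, pow_add, hpar, S.zeta_two_mul]
    have hsign : ((-1 : ℂ)) ^ (p.2.length * ((ps.map Prod.fst).flatten).length)
        = (-1 : ℂ) ^ ((p.2.length % 2) * (ps.map fun q => q.1.length % 2).sum) := by
      apply neg_one_pow_par
      have hs : (ps.map fun q => q.1.length % 2).sum % 2
          = (ps.map fun q => q.1.length).sum % 2 := by
        have := list_sum_mod (ps.map fun q => q.1.length)
        rwa [List.map_map] at this
      rw [hlen]
      conv_lhs => rw [Nat.mul_mod]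
      conv_rhs => rw [Nat.mul_mod]
      rw [Nat.mod_mod_of_dvd _ dvd_rfl, hs]
    rw [hsign]
    ring

lemma C_flatten (l : List (List S.Λ)) : S.C l.flatten = (l.map S.C).prod := by
  induction l with
  | nil => simp [S.C_nil]
  | cons a l ih => rw [List.flatten_cons, S.C_append, List.map_cons, List.prod_cons, ih]

end MajoranaSetting

/-- Lemma 4.3 of the paper: if `|𝔍_j| = |𝔍'_j|` for `j = 1, …, k`,
then the trace of the product of twisted basis elements factorizes:
`Tr((Θ(C_{𝔍₀})∘C_{𝔍₀'}) ⋯ (Θ(C_{𝔍_k})∘C_{𝔍_k'}))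
  = conj(Tr(C_{𝔍₀}⋯C_{𝔍_k})) · Tr(C_{𝔍₀'}⋯C_{𝔍_k'})`. -/
theorem trace_twisted_product_factorizes (S : MajoranaSetting) (k : ℕ)
    (F G : Fin (k + 1) → List S.Λ)
    (hFnd : ∀ j, (F j).Nodup) (hGnd : ∀ j, (G j).Nodup)
    (hFp : ∀ j, ∀ i ∈ F j, i ∈ S.Λp) (hGp : ∀ j, ∀ i ∈ G j, i ∈ S.Λp)
    (hdeg : ∀ j : Fin (k + 1), j ≠ 0 → (F j).length % 2 = (G j).length % 2) :
    S.Tr ((List.ofFn fun j => S.twist (S.Θ (S.C (F j))) (S.C (G j))).prod)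
      = starRingEnd ℂ (S.Tr ((List.ofFn fun j => S.C (F j)).prod))
        * S.Tr ((List.ofFn fun j => S.C (G j)).prod) := by
  classical
  have hp : ∀ p ∈ (List.ofFn fun j => (F j, G j)),
      (∀ i ∈ p.1, i ∈ S.Λp) ∧ (∀ i ∈ p.2, i ∈ S.Λp) := by
    intro p hpmem
    rw [List.mem_ofFn] at hpmem
    obtain ⟨j, rfl⟩ := hpmem
    exact ⟨hFp j, hGp j⟩
  have hkey := S.key (List.ofFn fun j => (F j, G j)) hp
  have h1 : (List.ofFn fun j => S.twist (S.Θ (S.C (F j))) (S.C (G j)))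
      = (List.ofFn fun j => (F j, G j)).map fun p => S.twist (S.Θ (S.C p.1)) (S.C p.2) := by
    rw [List.map_ofFn]; rfl
  have hLFm : ∀ i ∈ ((List.ofFn fun j => (F j, G j)).map Prod.fst).flatten, i ∈ S.Λp := by
    intro i hi
    obtain ⟨l, hl, hil⟩ := List.mem_flatten.mp hi
    obtain ⟨q, hq, rfl⟩ := List.mem_map.mp hl
    rw [List.mem_ofFn] at hq
    obtain ⟨j, rfl⟩ := hq
    exact hFp j i hil
  have hLGm : ∀ i ∈ ((List.ofFn fun j => (F j, G j)).map Prod.snd).flatten, i ∈ S.Λp := by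
    intro i hi
    obtain ⟨l, hl, hil⟩ := List.mem_flatten.mp hi
    obtain ⟨q, hq, rfl⟩ := List.mem_map.mp hl
    rw [List.mem_ofFn] at hq
    obtain ⟨j, rfl⟩ := hq
    exact hGp j i hil
  have eF : S.C ((List.ofFn fun j => (F j, G j)).map Prod.fst).flatten
      = (List.ofFn fun j => S.C (F j)).prod := by
    rw [S.C_flatten, List.map_ofFn, List.map_ofFn]
    rfl
  have eG : S.C ((List.ofFn fun j => (F j, G j)).map Prod.snd).flatten
      = (List.ofFn fun j => S.C (G j)).prod := by
    rw [S.C_flatten, List.map_ofFn, List.map_ofFn]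
    rfl
  have hlenF : (((List.ofFn fun j => (F j, G j)).map Prod.fst).flatten).length
      = ∑ j, (F j).length := by
    rw [List.length_flatten, List.map_ofFn, List.map_ofFn, List.sum_ofFn]
    rfl
  have hlenG : (((List.ofFn fun j => (F j, G j)).map Prod.snd).flatten).length
      = ∑ j, (G j).length := by
    rw [List.length_flatten, List.map_ofFn, List.map_ofFn, List.sum_ofFn]
    rfl
  rw [h1, hkey, map_smul, smul_eq_mul,
    S.TR _ _ (S.C_mem_plus _ hLFm) (S.C_mem_plus _ hLGm), eF, eG]
  by_cases hf : (∑ j, (F j).length) % 2 = 0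
  · by_cases hg : (∑ j, (G j).length) % 2 = 0
    · -- both even: the phase is 1
      have hfg : ∀ j, (F j).length % 2 = (G j).length % 2 := by
        intro j
        by_cases hj : j = 0
        · subst hj
          have hF2 : ((F 0).length + ∑ j : Fin k, (F j.succ).length) % 2 = 0 := by
            rw [← Fin.sum_univ_succ (fun j => (F j).length)]; exact hf
          have hG2 : ((G 0).length + ∑ j : Fin k, (G j.succ).length) % 2 = 0 := by
            rw [← Fin.sum_univ_succ (fun j => (G j).length)]; exact hg
          have ht1 := Finset.sum_nat_mod Finset.univ 2 (fun j : Fin k => (F j.succ).length)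
          have ht2 := Finset.sum_nat_mod Finset.univ 2 (fun j : Fin k => (G j.succ).length)
          have ht3 : (∑ j : Fin k, (F j.succ).length % 2)
              = (∑ j : Fin k, (G j.succ).length % 2) :=
            Finset.sum_congr rfl fun j _ => hdeg j.succ (Fin.succ_ne_zero j)
          omega
        · exact hdeg j hj
      have hmap : ((List.ofFn fun j => (F j, G j)).map
            fun p => (p.1.length % 2, p.2.length % 2))
          = (List.ofFn fun j => (G j).length % 2).map fun d => (d, d) := by
        rw [List.map_ofFn, List.map_ofFn]
        congr 1
        funext j
        show ((F j).length % 2, (G j).length % 2) = ((G j).length % 2, (G j).length % 2)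
        rw [hfg j]
      have hsum0 : (List.ofFn fun j => (G j).length % 2).sum % 2 = 0 := by
        rw [List.sum_ofFn]
        have := Finset.sum_nat_mod Finset.univ 2 (fun j => (G j).length)
        omega
      obtain ⟨t, ht⟩ : ∃ t, (List.ofFn fun j => (G j).length % 2).sum = 2 * t :=
        ⟨(List.ofFn fun j => (G j).length % 2).sum / 2, by omega⟩
      rw [hmap, MajoranaSetting.ephase_sq, ht, show (2 * t) ^ 2 = 4 * t ^ 2 by ring, pow_mul,
        S.zeta_pow_four, one_pow, one_mul]
    · -- Tr of the G-product vanishes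
      have h0 : S.Tr ((List.ofFn fun j => S.C (G j)).prod) = 0 := by
        rw [← eG]
        refine S.Tr_odd _ (S.C_mem_plus _ hLGm) ?_
        rw [S.gauge_C, hlenG, Odd.neg_one_pow (Nat.odd_iff.mpr (by omega)), neg_one_smul]
      rw [h0]
      ring
  · -- Tr of the F-product vanishes
    have h0 : S.Tr ((List.ofFn fun j => S.C (F j)).prod) = 0 := by
      rw [← eF]
      refine S.Tr_odd _ (S.C_mem_plus _ hLFm) ?_
      rw [S.gauge_C, hlenF, Odd.neg_one_pow (Nat.odd_iff.mpr (by omega)), neg_one_smul]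
    rw [h0, map_zero]
    ring
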